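/- Let G be a bridgeless cubic graph. If there exist two disjoint matchings E0 and E2 of G such that E0 ∪ E2 induces an even subgraph and, for each i ∈ {0,2}, the cubic graph obtained from G − Ei by suppressing all degree-2 vertices is 3-edge-colorable, then G has six perfect matchings covering every edge exactly twice (a Fulkerson cover); and conversely, if G has a Fulkerson cover then such matchings E0, E2 exist. -/

import Mathlib

open SimpleGraph Finset
open scoped Classical

/-- `M` is (the edge set of) a perfect matching of `G`: a set of edges of `G`
covering every vertex exactly once. -/
def IsPerfectMatchingSet {V : Type*} (G : SimpleGraph V) (M : Set (Sym2 V)) : Prop :=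
  M ⊆ G.edgeSet ∧ ∀ v : V, ∃! e, e ∈ M ∧ v ∈ e

/-- A matching of `G`: a set of edges of `G` such that every vertex is incident
with at most one of them. -/
def IsMatchingSet {V : Type*} (G : SimpleGraph V) (E : Set (Sym2 V)) : Prop :=
  E ⊆ G.edgeSet ∧ ∀ v : V, {e ∈ E | v ∈ e}.ncard ≤ 1

/-- The cubic graph `\overline{G ∖ E}` obtained from `G − E` by suppressing all
degree-2 vertices is 3-edge-colorable.  This is encoded on `G − E` itself: there
is a 3-coloring of the remaining edges which is proper at every vertex of degree
3 and constant at every vertex of degree 2 (such colorings correspond exactly to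
proper 3-edge-colorings of the suppressed cubic graph). -/
def SuppressionColorable {V : Type*} (G : SimpleGraph V) (E : Set (Sym2 V)) : Prop :=
  ∃ f : Sym2 V → Fin 3, ∀ v : V,
    ({e ∈ G.edgeSet \ E | v ∈ e}.ncard = 3 →
      ∀ e₁ ∈ G.edgeSet \ E, ∀ e₂ ∈ G.edgeSet \ E,
        v ∈ e₁ → v ∈ e₂ → e₁ ≠ e₂ → f e₁ ≠ f e₂) ∧
    ({e ∈ G.edgeSet \ E | v ∈ e}.ncard = 2 →
      ∀ e₁ ∈ G.edgeSet \ E, ∀ e₂ ∈ G.edgeSet \ E,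
        v ∈ e₁ → v ∈ e₂ → f e₁ = f e₂)

set_option linter.unusedSectionVars false

section
variable {V : Type*} [Fintype V] {G : SimpleGraph V}

private lemma incid_ncard (hcubic : ∀ v : V, (G.neighborSet v).ncard = 3) (v : V) :
    {e ∈ G.edgeSet | v ∈ e}.ncard = 3 := by
  have h1 : {e ∈ G.edgeSet | v ∈ e} = G.incidenceSet v := rfl
  rw [h1, ← Nat.card_coe_set_eq, Nat.card_congr (G.incidenceSetEquivNeighborSet v),
    Nat.card_coe_set_eq, hcubic]

private lemma matching_unique {E : Set (Sym2 V)} (hE : IsMatchingSet G E) {e e' : Sym2 V}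
    (he : e ∈ E) (he' : e' ∈ E) {v : V} (hv : v ∈ e) (hv' : v ∈ e') : e = e' := by
  by_contra hne
  have h2 : ({e, e'} : Set (Sym2 V)) ⊆ {x ∈ E | v ∈ x} := by
    rintro x (rfl | rfl) <;> exact ⟨by assumption, by assumption⟩
  have := Set.ncard_le_ncard h2 (Set.toFinite _)
  rw [Set.ncard_pair hne] at this
  have := hE.2 v
  omega

/-- three distinct incident edges exhaust the incidence set -/
private lemma incid_exhaust (hcubic : ∀ v : V, (G.neighborSet v).ncard = 3) (v : V)
    {a b c : Sym2 V} (hab : a ≠ b) (hac : a ≠ c) (hbc : b ≠ c)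
    (ha : a ∈ G.edgeSet ∧ v ∈ a) (hb : b ∈ G.edgeSet ∧ v ∈ b) (hc : c ∈ G.edgeSet ∧ v ∈ c) :
    ∀ e, e ∈ G.edgeSet → v ∈ e → e = a ∨ e = b ∨ e = c := by
  intro e he hv
  by_contra hcon
  push_neg at hcon
  obtain ⟨hea, heb, hec⟩ := hcon
  have hsub : ({e, a, b, c} : Set (Sym2 V)) ⊆ {x ∈ G.edgeSet | v ∈ x} := by
    rintro x (rfl | rfl | rfl | rfl) <;> exact ⟨by tauto, by tauto⟩
  have h4 : ({e, a, b, c} : Set (Sym2 V)).ncard = 4 := by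
    rw [Set.ncard_insert_of_notMem (by simp [hea, heb, hec]) (Set.toFinite _),
      Set.ncard_insert_of_notMem (by simp [hab, hac]) (Set.toFinite _),
      Set.ncard_pair hbc]
  have := Set.ncard_le_ncard hsub (Set.toFinite _)
  rw [h4, incid_ncard hcubic v] at this
  omega

/-- a vertex covered by a matching: description of incident edges off the matching -/
private lemma covered_diff (hcubic : ∀ v : V, (G.neighborSet v).ncard = 3)
    {E : Set (Sym2 V)} (hE : IsMatchingSet G E) {e0 : Sym2 V} (he0 : e0 ∈ E) {v : V}
    (hv : v ∈ e0) :
    {e ∈ G.edgeSet \ E | v ∈ e} = {e ∈ G.edgeSet | v ∈ e} \ {e0} := by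
  ext e
  constructor
  · rintro ⟨⟨h1, h2⟩, h3⟩
    exact ⟨⟨h1, h3⟩, by rintro rfl; exact h2 he0⟩
  · rintro ⟨⟨h1, h3⟩, h2⟩
    refine ⟨⟨h1, fun heE => ?_⟩, h3⟩
    exact (Set.mem_singleton_iff.not.mp h2) (matching_unique hE heE he0 h3 hv)

private lemma covered_ncard2 (hcubic : ∀ v : V, (G.neighborSet v).ncard = 3)
    {E : Set (Sym2 V)} (hE : IsMatchingSet G E) {e0 : Sym2 V} (he0 : e0 ∈ E) {v : V}
    (hv : v ∈ e0) : {e ∈ G.edgeSet \ E | v ∈ e}.ncard = 2 := by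
  rw [covered_diff hcubic hE he0 hv,
    Set.ncard_diff_singleton_of_mem (show e0 ∈ {e ∈ G.edgeSet | v ∈ e} from ⟨hE.1 he0, hv⟩), incid_ncard hcubic v]

private lemma uncovered_diff {E : Set (Sym2 V)} {v : V} (h : ¬ ∃ e ∈ E, v ∈ e) :
    {e ∈ G.edgeSet \ E | v ∈ e} = {e ∈ G.edgeSet | v ∈ e} := by
  push_neg at h
  ext e
  exact ⟨fun ⟨⟨h1, _⟩, h3⟩ => ⟨h1, h3⟩, fun ⟨h1, h3⟩ => ⟨⟨h1, fun heE => h e heE h3⟩, h3⟩⟩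


/-- at a vertex covered by both matchings: the third edge -/
private lemma third_edge (hcubic : ∀ v : V, (G.neighborSet v).ncard = 3)
    {Ea Eb : Set (Sym2 V)} (hEa : IsMatchingSet G Ea) (hEb : IsMatchingSet G Eb)
    (hd : Disjoint Ea Eb) {v : V} {ea eb : Sym2 V} (hea : ea ∈ Ea) (heb : eb ∈ Eb)
    (hva : v ∈ ea) (hvb : v ∈ eb) :
    ∃ t, t ∈ G.edgeSet ∧ t ∉ Ea ∧ t ∉ Eb ∧ v ∈ t ∧ ea ≠ eb ∧ ea ≠ t ∧ eb ≠ t ∧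
      (∀ e, e ∈ G.edgeSet → v ∈ e → e = ea ∨ e = eb ∨ e = t) := by
  have hne : ea ≠ eb := by
    rintro rfl
    exact (Set.disjoint_left.mp hd hea) heb
  -- find a third incident edge
  have hsub : ¬ {e ∈ G.edgeSet | v ∈ e} ⊆ ({ea, eb} : Set (Sym2 V)) := by
    intro hs
    have := Set.ncard_le_ncard hs (Set.toFinite _)
    rw [incid_ncard hcubic v, Set.ncard_pair hne] at this
    omega
  obtain ⟨t, ht, htne⟩ := Set.not_subset.mp hsub
  simp only [Set.mem_insert_iff, Set.mem_singleton_iff, not_or] at htne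
  obtain ⟨hta, htb⟩ := htne
  refine ⟨t, ht.1, ?_, ?_, ht.2, hne, Ne.symm hta, Ne.symm htb, ?_⟩
  · exact fun h => hta (matching_unique hEa h hea ht.2 hva)
  · exact fun h => htb (matching_unique hEb h heb ht.2 hvb)
  · exact incid_exhaust hcubic v hne (Ne.symm hta) (Ne.symm htb)
      ⟨hEa.1 hea, hva⟩ ⟨hEb.1 heb, hvb⟩ ⟨ht.1, ht.2⟩
private lemma proper_exists_unique (hcubic : ∀ v : V, (G.neighborSet v).ncard = 3)
    {f : Sym2 V → Fin 3} {v : V}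
    (hprop : ∀ e₁, e₁ ∈ G.edgeSet → v ∈ e₁ → ∀ e₂, e₂ ∈ G.edgeSet → v ∈ e₂ →
      e₁ ≠ e₂ → f e₁ ≠ f e₂) (i : Fin 3) :
    ∃! e, (e ∈ G.edgeSet ∧ v ∈ e) ∧ f e = i := by
  have hinj : Set.InjOn f {e ∈ G.edgeSet | v ∈ e} := by
    intro x hx y hy hxy
    by_contra hne
    exact hprop x hx.1 hx.2 y hy.1 hy.2 hne hxy
  have himg : (f '' {e ∈ G.edgeSet | v ∈ e}) = Set.univ := by
    apply Set.eq_of_subset_of_ncard_le (Set.subset_univ _) _ (Set.toFinite _)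
    rw [Set.ncard_image_of_injOn hinj, incid_ncard hcubic v, Set.ncard_univ]
    simp
  have hi : i ∈ f '' {e ∈ G.edgeSet | v ∈ e} := himg ▸ Set.mem_univ i
  obtain ⟨e, he, hfe⟩ := hi
  exact ⟨e, ⟨⟨he.1, he.2⟩, hfe⟩, fun e' ⟨he', hfe'⟩ =>
    hinj (Set.mem_sep he'.1 he'.2) (Set.mem_sep he.1 he.2) (hfe'.trans hfe.symm)⟩
private lemma pm_side (hcubic : ∀ v : V, (G.neighborSet v).ncard = 3)
    {Ea Eb : Set (Sym2 V)} (hEa : IsMatchingSet G Ea) (hEb : IsMatchingSet G Eb)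
    (hd : Disjoint Ea Eb)
    (hcov : ∀ v : V, (∃ e ∈ Ea, v ∈ e) ↔ (∃ e ∈ Eb, v ∈ e))
    {f : Sym2 V → Fin 3}
    (hf : ∀ v : V,
      ({e ∈ G.edgeSet \ Ea | v ∈ e}.ncard = 3 →
        ∀ e₁ ∈ G.edgeSet \ Ea, ∀ e₂ ∈ G.edgeSet \ Ea,
          v ∈ e₁ → v ∈ e₂ → e₁ ≠ e₂ → f e₁ ≠ f e₂) ∧
      ({e ∈ G.edgeSet \ Ea | v ∈ e}.ncard = 2 →
        ∀ e₁ ∈ G.edgeSet \ Ea, ∀ e₂ ∈ G.edgeSet \ Ea,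
          v ∈ e₁ → v ∈ e₂ → f e₁ = f e₂)) (i : Fin 3) :
    IsPerfectMatchingSet G
      ({e | e ∈ G.edgeSet ∧ e ∉ Ea ∧ e ∉ Eb ∧ f e = i} ∪ {e ∈ Eb | f e ≠ i}) := by
  constructor
  · rintro e (he | he)
    exacts [he.1, hEb.1 he.1]
  intro v
  by_cases hcv : ∃ e ∈ Ea, v ∈ e
  · obtain ⟨ea, hea, hva⟩ := hcv
    obtain ⟨eb, heb, hvb⟩ := (hcov v).mp ⟨ea, hea, hva⟩
    obtain ⟨t, htE, htA, htB, hvt, hab, hat, hbt, hall⟩ :=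
      third_edge hcubic hEa hEb hd hea heb hva hvb
    have h2 : {e ∈ G.edgeSet \ Ea | v ∈ e}.ncard = 2 := covered_ncard2 hcubic hEa hea hva
    have hbm : eb ∈ G.edgeSet \ Ea := ⟨hEb.1 heb, fun h => Set.disjoint_left.mp hd h heb⟩
    have htm : t ∈ G.edgeSet \ Ea := ⟨htE, htA⟩
    have hconst : f eb = f t := (hf v).2 h2 eb hbm t htm hvb hvt
    by_cases hi : f t = i
    · refine ⟨t, ⟨Or.inl ⟨htE, htA, htB, hi⟩, hvt⟩, ?_⟩
      rintro e ⟨he, hve⟩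
      have heE : e ∈ G.edgeSet := by rcases he with h | h; exacts [h.1, hEb.1 h.1]
      rcases hall e heE hve with rfl | rfl | rfl
      · rcases he with h | h
        · exact absurd hea h.2.1
        · exact absurd h.1 (Set.disjoint_left.mp hd hea)
      · rcases he with h | h
        · exact absurd heb h.2.2.1
        · exact absurd (hconst.trans hi) h.2
      · rfl
    · refine ⟨eb, ⟨Or.inr ⟨heb, fun h => hi (hconst.symm.trans h)⟩, hvb⟩, ?_⟩
      rintro e ⟨he, hve⟩
      have heE : e ∈ G.edgeSet := by rcases he with h | h; exacts [h.1, hEb.1 h.1]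
      rcases hall e heE hve with rfl | rfl | rfl
      · rcases he with h | h
        · exact absurd hea h.2.1
        · exact absurd h.1 (Set.disjoint_left.mp hd hea)
      · rfl
      · rcases he with h | h
        · exact absurd h.2.2.2 hi
        · exact absurd h.1 htB
  · have hcv2 : ¬ ∃ e ∈ Eb, v ∈ e := fun h => hcv ((hcov v).mpr h)
    have h3 : {e ∈ G.edgeSet \ Ea | v ∈ e}.ncard = 3 := by
      rw [uncovered_diff hcv]; exact incid_ncard hcubic v
    have hprop := (hf v).1 h3
    obtain ⟨e, ⟨⟨heE, hve⟩, hfe⟩, huniq⟩ := proper_exists_unique hcubic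
      (fun e₁ h1 hv1 e₂ h2' hv2 =>
        hprop e₁ ⟨h1, fun h => hcv ⟨e₁, h, hv1⟩⟩ e₂ ⟨h2', fun h => hcv ⟨e₂, h, hv2⟩⟩ hv1 hv2) i
    refine ⟨e, ⟨Or.inl ⟨heE, fun h => hcv ⟨e, h, hve⟩, fun h => hcv2 ⟨e, h, hve⟩, hfe⟩, hve⟩, ?_⟩
    rintro e' ⟨he', hve'⟩
    rcases he' with h | h
    · exact huniq e' ⟨⟨h.1, hve'⟩, h.2.2.2⟩
    · exact absurd ⟨e', h.1, hve'⟩ hcv2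
private lemma card_two_helper {p : Fin 6 → Prop} {a b : Fin 6} (hab : a ≠ b)
    (h : ∀ i, p i ↔ (i = a ∨ i = b)) : (univ.filter p).card = 2 := by
  have he : univ.filter p = {a, b} := by
    ext i
    simp [h i]
  rw [he, Finset.card_insert_of_notMem (by simp [hab]), Finset.card_singleton]

private lemma cov_iff_of_even {E0 E2 : Set (Sym2 V)} (hE0 : IsMatchingSet G E0)
    (hE2 : IsMatchingSet G E2)
    (heven : ∀ v : V, Even {e ∈ E0 ∪ E2 | v ∈ e}.ncard) (v : V) :
    (∃ e ∈ E0, v ∈ e) ↔ (∃ e ∈ E2, v ∈ e) := by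
  constructor
  · rintro ⟨e0, he0, hv0⟩
    by_contra hno
    push_neg at hno
    have hset : {e ∈ E0 ∪ E2 | v ∈ e} = {e0} := by
      ext e
      constructor
      · rintro ⟨h | h, hv⟩
        · exact Set.mem_singleton_iff.mpr (matching_unique hE0 h he0 hv hv0)
        · exact absurd hv (hno e h)
      · rintro rfl
        exact ⟨Or.inl he0, hv0⟩
    have hev := heven v
    rw [hset, Set.ncard_singleton] at hev
    simp at hev
  · rintro ⟨e2, he2, hv2⟩
    by_contra hno
    push_neg at hno
    have hset : {e ∈ E0 ∪ E2 | v ∈ e} = {e2} := by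
      ext e
      constructor
      · rintro ⟨h | h, hv⟩
        · exact absurd hv (hno e h)
        · exact Set.mem_singleton_iff.mpr (matching_unique hE2 h he2 hv hv2)
      · rintro rfl
        exact ⟨Or.inr he2, hv2⟩
    have hev := heven v
    rw [hset, Set.ncard_singleton] at hev
    simp at hev

private lemma forward (hcubic : ∀ v : V, (G.neighborSet v).ncard = 3)
    {E0 E2 : Set (Sym2 V)} (hE0 : IsMatchingSet G E0) (hE2 : IsMatchingSet G E2)
    (hd : Disjoint E0 E2) (heven : ∀ v : V, Even {e ∈ E0 ∪ E2 | v ∈ e}.ncard)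
    (hS0 : SuppressionColorable G E0) (hS2 : SuppressionColorable G E2) :
    ∃ M : Fin 6 → Set (Sym2 V), (∀ i, IsPerfectMatchingSet G (M i)) ∧
      ∀ e ∈ G.edgeSet, (Finset.univ.filter (fun i : Fin 6 => e ∈ M i)).card = 2 := by
  obtain ⟨f0, hf0⟩ := hS0
  obtain ⟨f2, hf2⟩ := hS2
  have hcov := cov_iff_of_even hE0 hE2 heven
  have hcov' : ∀ v : V, (∃ e ∈ E2, v ∈ e) ↔ (∃ e ∈ E0, v ∈ e) := fun v => (hcov v).symm
  set A : Fin 3 → Set (Sym2 V) :=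
    fun i => {e | e ∈ G.edgeSet ∧ e ∉ E0 ∧ e ∉ E2 ∧ f0 e = i} ∪ {e ∈ E2 | f0 e ≠ i} with hA
  set B : Fin 3 → Set (Sym2 V) :=
    fun j => {e | e ∈ G.edgeSet ∧ e ∉ E2 ∧ e ∉ E0 ∧ f2 e = j} ∪ {e ∈ E0 | f2 e ≠ j} with hB
  have hApm : ∀ i, IsPerfectMatchingSet G (A i) := pm_side hcubic hE0 hE2 hd hcov hf0
  have hBpm : ∀ j, IsPerfectMatchingSet G (B j) := pm_side hcubic hE2 hE0 hd.symm hcov' hf2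
  refine ⟨![A 0, A 1, A 2, B 0, B 1, B 2], ?_, ?_⟩
  · intro i
    fin_cases i
    exacts [hApm 0, hApm 1, hApm 2, hBpm 0, hBpm 1, hBpm 2]
  · intro e heE
    have hAmem : ∀ i, e ∈ A i ↔
        ((e ∈ G.edgeSet ∧ e ∉ E0 ∧ e ∉ E2 ∧ f0 e = i) ∨ (e ∈ E2 ∧ f0 e ≠ i)) :=
      fun i => Iff.rfl
    have hBmem : ∀ j, e ∈ B j ↔
        ((e ∈ G.edgeSet ∧ e ∉ E2 ∧ e ∉ E0 ∧ f2 e = j) ∨ (e ∈ E0 ∧ f2 e ≠ j)) :=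
      fun j => Iff.rfl
    have g0 : (![A 0, A 1, A 2, B 0, B 1, B 2] : Fin 6 → Set (Sym2 V)) 0 = A 0 := rfl
    have g1 : (![A 0, A 1, A 2, B 0, B 1, B 2] : Fin 6 → Set (Sym2 V)) 1 = A 1 := rfl
    have g2 : (![A 0, A 1, A 2, B 0, B 1, B 2] : Fin 6 → Set (Sym2 V)) 2 = A 2 := rfl
    have g3 : (![A 0, A 1, A 2, B 0, B 1, B 2] : Fin 6 → Set (Sym2 V)) 3 = B 0 := rfl
    have g4 : (![A 0, A 1, A 2, B 0, B 1, B 2] : Fin 6 → Set (Sym2 V)) 4 = B 1 := rfl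
    have g5 : (![A 0, A 1, A 2, B 0, B 1, B 2] : Fin 6 → Set (Sym2 V)) 5 = B 2 := rfl
    have tri : ∀ c : Fin 3, c = 0 ∨ c = 1 ∨ c = 2 := by decide
    by_cases h0 : e ∈ E0
    · have h2 : e ∉ E2 := fun h => Set.disjoint_left.mp hd h0 h
      have hAe : ∀ i, e ∉ A i := by
        intro i hmem
        rcases (hAmem i).mp hmem with h | h
        · exact h.2.1 h0
        · exact h2 h.1
      have hBe : ∀ j, e ∈ B j ↔ f2 e ≠ j := by
        intro j
        rw [hBmem j]
        constructor
        · rintro (h | h)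
          · exact absurd h0 h.2.2.1
          · exact h.2
        · exact fun h => Or.inr ⟨h0, h⟩
      rcases tri (f2 e) with hc | hc | hc
      · exact card_two_helper (a := 4) (b := 5) (by decide)
          (fun i => by fin_cases i <;> simp [g0, g1, g2, g3, g4, g5, hAe, hBe, hc])
      · exact card_two_helper (a := 3) (b := 5) (by decide)
          (fun i => by fin_cases i <;> simp [g0, g1, g2, g3, g4, g5, hAe, hBe, hc])
      · exact card_two_helper (a := 3) (b := 4) (by decide)
          (fun i => by fin_cases i <;> simp [g0, g1, g2, g3, g4, g5, hAe, hBe, hc])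
    · by_cases h2 : e ∈ E2
      · have hBe : ∀ j, e ∉ B j := by
          intro j hmem
          rcases (hBmem j).mp hmem with h | h
          · exact h.2.1 h2
          · exact h0 h.1
        have hAe : ∀ i, e ∈ A i ↔ f0 e ≠ i := by
          intro i
          rw [hAmem i]
          constructor
          · rintro (h | h)
            · exact absurd h2 h.2.2.1
            · exact h.2
          · exact fun h => Or.inr ⟨h2, h⟩
        rcases tri (f0 e) with hc | hc | hc
        · exact card_two_helper (a := 1) (b := 2) (by decide)
            (fun i => by fin_cases i <;> simp [g0, g1, g2, g3, g4, g5, hAe, hBe, hc])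
        · exact card_two_helper (a := 0) (b := 2) (by decide)
            (fun i => by fin_cases i <;> simp [g0, g1, g2, g3, g4, g5, hAe, hBe, hc])
        · exact card_two_helper (a := 0) (b := 1) (by decide)
            (fun i => by fin_cases i <;> simp [g0, g1, g2, g3, g4, g5, hAe, hBe, hc])
      · have hAe : ∀ i, e ∈ A i ↔ f0 e = i := by
          intro i
          rw [hAmem i]
          constructor
          · rintro (h | h)
            · exact h.2.2.2
            · exact absurd h.1 h2
          · exact fun h => Or.inl ⟨heE, h0, h2, h⟩
        have hBe : ∀ j, e ∈ B j ↔ f2 e = j := by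
          intro j
          rw [hBmem j]
          constructor
          · rintro (h | h)
            · exact h.2.2.2
            · exact absurd h.1 h0
          · exact fun h => Or.inl ⟨heE, h2, h0, h⟩
        rcases tri (f0 e) with hc0 | hc0 | hc0 <;> rcases tri (f2 e) with hc2 | hc2 | hc2
        · exact card_two_helper (a := 0) (b := 3) (by decide)
            (fun i => by fin_cases i <;> simp [g0, g1, g2, g3, g4, g5, hAe, hBe, hc0, hc2])
        · exact card_two_helper (a := 0) (b := 4) (by decide)
            (fun i => by fin_cases i <;> simp [g0, g1, g2, g3, g4, g5, hAe, hBe, hc0, hc2])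
        · exact card_two_helper (a := 0) (b := 5) (by decide)
            (fun i => by fin_cases i <;> simp [g0, g1, g2, g3, g4, g5, hAe, hBe, hc0, hc2])
        · exact card_two_helper (a := 1) (b := 3) (by decide)
            (fun i => by fin_cases i <;> simp [g0, g1, g2, g3, g4, g5, hAe, hBe, hc0, hc2])
        · exact card_two_helper (a := 1) (b := 4) (by decide)
            (fun i => by fin_cases i <;> simp [g0, g1, g2, g3, g4, g5, hAe, hBe, hc0, hc2])
        · exact card_two_helper (a := 1) (b := 5) (by decide)
            (fun i => by fin_cases i <;> simp [g0, g1, g2, g3, g4, g5, hAe, hBe, hc0, hc2])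
        · exact card_two_helper (a := 2) (b := 3) (by decide)
            (fun i => by fin_cases i <;> simp [g0, g1, g2, g3, g4, g5, hAe, hBe, hc0, hc2])
        · exact card_two_helper (a := 2) (b := 4) (by decide)
            (fun i => by fin_cases i <;> simp [g0, g1, g2, g3, g4, g5, hAe, hBe, hc0, hc2])
        · exact card_two_helper (a := 2) (b := 5) (by decide)
            (fun i => by fin_cases i <;> simp [g0, g1, g2, g3, g4, g5, hAe, hBe, hc0, hc2])
private lemma slot_disjoint {M : Fin 6 → Set (Sym2 V)}
    (hPM : ∀ i, IsPerfectMatchingSet G (M i)) {e e' : Sym2 V} {v : V}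
    (hv : v ∈ e) (hv' : v ∈ e') (hne : e ≠ e') (i : Fin 6) (he : e ∈ M i) :
    e' ∉ M i := by
  intro he'
  obtain ⟨w, _, hw⟩ := (hPM i).2 v
  exact hne ((hw e ⟨he, hv⟩).trans (hw e' ⟨he', hv'⟩).symm)

private lemma Tcard_sub_hi {M : Fin 6 → Set (Sym2 V)} {e : Sym2 V}
    (he : e ∈ G.edgeSet ∧ ∀ i : Fin 6, e ∈ M i → 3 ≤ i.val) :
    (univ.filter (fun i : Fin 6 => e ∈ M i)) ⊆ ({3, 4, 5} : Finset (Fin 6)) := by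
  intro i hi
  rw [Finset.mem_filter] at hi
  have h3 := he.2 i hi.2
  have : ∀ i : Fin 6, 3 ≤ i.val → i ∈ ({3, 4, 5} : Finset (Fin 6)) := by decide
  exact this i h3

private lemma hi_matching (hcubic : ∀ v : V, (G.neighborSet v).ncard = 3)
    {M : Fin 6 → Set (Sym2 V)} (hPM : ∀ i, IsPerfectMatchingSet G (M i))
    (hct : ∀ e ∈ G.edgeSet, (univ.filter (fun i : Fin 6 => e ∈ M i)).card = 2) :
    IsMatchingSet G {e | e ∈ G.edgeSet ∧ ∀ i : Fin 6, e ∈ M i → 3 ≤ i.val} := by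
  constructor
  · exact fun e he => he.1
  intro v
  by_contra hcon
  push_neg at hcon
  obtain ⟨e, ⟨he, hve⟩, e', ⟨he', hve'⟩, hne⟩ :=
    (Set.one_lt_ncard (Set.toFinite _)).mp hcon
  have hd : Disjoint (univ.filter (fun i : Fin 6 => e ∈ M i))
      (univ.filter (fun i : Fin 6 => e' ∈ M i)) := by
    rw [Finset.disjoint_left]
    intro i hi hi'
    rw [Finset.mem_filter] at hi hi'
    exact slot_disjoint hPM hve hve' hne i hi.2 hi'.2
  have hsub : (univ.filter (fun i : Fin 6 => e ∈ M i)) ∪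
      (univ.filter (fun i : Fin 6 => e' ∈ M i)) ⊆ ({3, 4, 5} : Finset (Fin 6)) :=
    Finset.union_subset (Tcard_sub_hi he) (Tcard_sub_hi he')
  have hle := Finset.card_le_card hsub
  rw [Finset.card_union_of_disjoint hd, hct e he.1, hct e' he'.1] at hle
  simp at hle

/-- covered by the "high" matching set implies covered by the "low" side -/
private lemma hi_cov_lo (hcubic : ∀ v : V, (G.neighborSet v).ncard = 3)
    {M : Fin 6 → Set (Sym2 V)} (hPM : ∀ i, IsPerfectMatchingSet G (M i))
    (hct : ∀ e ∈ G.edgeSet, (univ.filter (fun i : Fin 6 => e ∈ M i)).card = 2) {v : V}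
    {e0 : Sym2 V} (he0 : e0 ∈ G.edgeSet ∧ ∀ i : Fin 6, e0 ∈ M i → 3 ≤ i.val)
    (hve0 : v ∈ e0) :
    ∃ e', (e' ∈ G.edgeSet ∧ ∀ i : Fin 6, e' ∈ M i → i.val < 3) ∧ v ∈ e' := by
  -- the edges at v used by the three "low" matchings
  have hm : ∀ j : Fin 6, j.val < 3 → ∃ w, (w ∈ M j ∧ v ∈ w) ∧ w ≠ e0 ∧ w ∈ G.edgeSet := by
    intro j hj
    obtain ⟨w, hw, _⟩ := (hPM j).2 v
    refine ⟨w, hw, fun hweq => ?_, (hPM j).1 hw.1⟩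
    subst hweq
    exact absurd (he0.2 j hw.1) (by omega)
  obtain ⟨w0, hw0, hw0ne, hw0E⟩ := hm 0 (by norm_num)
  obtain ⟨w1, hw1, hw1ne, hw1E⟩ := hm 1 (by norm_num)
  obtain ⟨w2, hw2, hw2ne, hw2E⟩ := hm 2 (by norm_num)
  -- two of w0 w1 w2 coincide
  have key : ∃ w, ∃ j j' : Fin 6, j ≠ j' ∧ j.val < 3 ∧ j'.val < 3 ∧
      (w ∈ M j ∧ v ∈ w) ∧ (w ∈ M j' ∧ v ∈ w) ∧ w ∈ G.edgeSet := by
    by_cases h01 : w0 = w1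
    · exact ⟨w0, 0, 1, by decide, by norm_num, by norm_num, hw0, h01 ▸ hw1, hw0E⟩
    by_cases h02 : w0 = w2
    · exact ⟨w0, 0, 2, by decide, by norm_num, by norm_num, hw0, h02 ▸ hw2, hw0E⟩
    by_cases h12 : w1 = w2
    · exact ⟨w1, 1, 2, by decide, by norm_num, by norm_num, hw1, h12 ▸ hw2, hw1E⟩
    · -- four distinct incident edges: contradiction with cubic
      exfalso
      have hsub : ({e0, w0, w1, w2} : Set (Sym2 V)) ⊆ {x ∈ G.edgeSet | v ∈ x} := by
        rintro x (rfl | rfl | rfl | rfl)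
        exacts [⟨he0.1, hve0⟩, ⟨hw0E, hw0.2⟩, ⟨hw1E, hw1.2⟩, ⟨hw2E, hw2.2⟩]
      have h4 : ({e0, w0, w1, w2} : Set (Sym2 V)).ncard = 4 := by
        rw [Set.ncard_insert_of_notMem
            (by simp [Ne.symm hw0ne, Ne.symm hw1ne, Ne.symm hw2ne]) (Set.toFinite _),
          Set.ncard_insert_of_notMem (by simp [h01, h02]) (Set.toFinite _),
          Set.ncard_pair h12]
      have := Set.ncard_le_ncard hsub (Set.toFinite _)
      rw [h4, incid_ncard hcubic v] at this
      omega
  obtain ⟨w, j, j', hjj, hj, hj', hwj, hwj', hwE⟩ := key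
  refine ⟨w, ⟨hwE, ?_⟩, hwj.2⟩
  -- T w = {j, j'}
  have hsub : ({j, j'} : Finset (Fin 6)) ⊆ univ.filter (fun i : Fin 6 => w ∈ M i) := by
    intro i hi
    rw [Finset.mem_insert, Finset.mem_singleton] at hi
    rcases hi with rfl | rfl
    · exact Finset.mem_filter.mpr ⟨Finset.mem_univ _, hwj.1⟩
    · exact Finset.mem_filter.mpr ⟨Finset.mem_univ _, hwj'.1⟩
  have heq : univ.filter (fun i : Fin 6 => w ∈ M i) = {j, j'} := by
    apply (Finset.eq_of_subset_of_card_le hsub _).symm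
    rw [hct w hwE, Finset.card_insert_of_notMem (by simp [hjj]), Finset.card_singleton]
  intro i hwi
  have : i ∈ ({j, j'} : Finset (Fin 6)) := by
    rw [← heq, Finset.mem_filter]
    exact ⟨Finset.mem_univ _, hwi⟩
  rw [Finset.mem_insert, Finset.mem_singleton] at this
  rcases this with rfl | rfl <;> omega
private lemma hi_colorable (hcubic : ∀ v : V, (G.neighborSet v).ncard = 3)
    {M : Fin 6 → Set (Sym2 V)} (hPM : ∀ i, IsPerfectMatchingSet G (M i))
    (hct : ∀ e ∈ G.edgeSet, (univ.filter (fun i : Fin 6 => e ∈ M i)).card = 2) :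
    SuppressionColorable G {e | e ∈ G.edgeSet ∧ ∀ i : Fin 6, e ∈ M i → 3 ≤ i.val} := by
  set E0 : Set (Sym2 V) := {e | e ∈ G.edgeSet ∧ ∀ i : Fin 6, e ∈ M i → 3 ≤ i.val} with hE0def
  set emb : Fin 3 → Fin 6 := Fin.castLE (by norm_num) with hembdef
  set c : Sym2 V → Finset (Fin 3) :=
    fun e => univ.filter (fun j : Fin 3 => e ∈ M (emb j)) with hcdef
  refine ⟨fun e => if (c e).card = 2 then -∑ j ∈ c e, j else ∑ j ∈ c e, j, ?_⟩
  set f : Sym2 V → Fin 3 :=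
    fun e => if (c e).card = 2 then -∑ j ∈ c e, j else ∑ j ∈ c e, j with hfdef
  -- basic facts
  have fsing : ∀ {e a}, c e = {a} → f e = a := by
    intro e a h
    rw [hfdef]
    simp only [h, Finset.card_singleton, Finset.sum_singleton]
    norm_num
  have fpair : ∀ {e a b}, a ≠ b → c e = {a, b} → f e = -(a + b) := by
    intro e a b hne h
    rw [hfdef]
    simp only [h, Finset.card_pair hne, Finset.sum_pair hne]
    norm_num
  have arith : ∀ a b d : Fin 3, a ≠ b → a ≠ d → b ≠ d → -(b + d) = a := by decide
  have cne : ∀ e, e ∈ G.edgeSet \ E0 → (c e).Nonempty := by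
    rintro e ⟨heE, hne0⟩
    have h1 : ¬ ∀ i : Fin 6, e ∈ M i → 3 ≤ i.val := fun h => hne0 ⟨heE, h⟩
    push_neg at h1
    obtain ⟨i, hi, hlt⟩ := h1
    refine ⟨⟨i.val, by omega⟩, Finset.mem_filter.mpr ⟨Finset.mem_univ _, ?_⟩⟩
    have : emb ⟨i.val, by omega⟩ = i := Fin.ext rfl
    rw [this]
    exact hi
  have cmem : ∀ {e j}, j ∈ c e → e ∈ M (emb j) := by
    intro e j hj
    exact (Finset.mem_filter.mp hj).2
  have cdisj : ∀ {e e' : Sym2 V} {v : V}, v ∈ e → v ∈ e' → e ≠ e' →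
      Disjoint (c e) (c e') := by
    intro e e' v hv hv' hne
    rw [Finset.disjoint_left]
    intro j hj hj'
    exact slot_disjoint hPM hv hv' hne (emb j) (cmem hj) (cmem hj')
  -- every low slot is used by an incident non-E0 edge
  have lowslot : ∀ (v : V) (j : Fin 3), ∃ w, w ∈ G.edgeSet \ E0 ∧ v ∈ w ∧ j ∈ c w := by
    intro v j
    obtain ⟨w, hw, _⟩ := (hPM (emb j)).2 v
    have hwE : w ∈ G.edgeSet := (hPM (emb j)).1 hw.1
    have hjlt : (emb j).val < 3 := by
      have : (emb j).val = j.val := rfl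
      omega
    refine ⟨w, ⟨hwE, fun hmem => ?_⟩, hw.2, Finset.mem_filter.mpr ⟨Finset.mem_univ _, hw.1⟩⟩
    have := hmem.2 (emb j) hw.1
    omega
  intro v
  constructor
  · -- degree-3 case
    intro h3 e₁ he₁ e₂ he₂ hv₁ hv₂ hne
    -- third edge
    have hsub : ¬ {e | e ∈ G.edgeSet \ E0 ∧ v ∈ e} ⊆ ({e₁, e₂} : Set (Sym2 V)) := by
      intro hs
      have := Set.ncard_le_ncard hs (Set.toFinite _)
      rw [h3, Set.ncard_pair hne] at this
      omega
    obtain ⟨e₃, he₃, h₃ne⟩ := Set.not_subset.mp hsub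
    simp only [Set.mem_insert_iff, Set.mem_singleton_iff, not_or] at h₃ne
    obtain ⟨h31, h32⟩ := h₃ne
    -- the set is exactly the triple
    have htrip : ({e₁, e₂, e₃} : Set (Sym2 V)) = {e | e ∈ G.edgeSet \ E0 ∧ v ∈ e} := by
      apply Set.eq_of_subset_of_ncard_le _ _ (Set.toFinite _)
      · rintro x (rfl | rfl | rfl)
        exacts [⟨he₁, hv₁⟩, ⟨he₂, hv₂⟩, he₃]
      · rw [h3]
        have h33 : ({e₁, e₂, e₃} : Set (Sym2 V)).ncard = 3 := by
          rw [Set.ncard_insert_of_notMem (by simp [hne, Ne.symm h31]) (Set.toFinite _),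
            Set.ncard_pair (Ne.symm h32)]
        omega
    have hv₃ : v ∈ e₃ := he₃.2
    -- disjoint nonempty c's covering univ
    have hd12 := cdisj hv₁ hv₂ hne
    have hd13 := cdisj hv₁ hv₃ (Ne.symm h31)
    have hd23 := cdisj hv₂ hv₃ (Ne.symm h32)
    have hcover : (univ : Finset (Fin 3)) ⊆ c e₁ ∪ c e₂ ∪ c e₃ := by
      intro j _
      obtain ⟨w, hw, hvw, hjw⟩ := lowslot v j
      have : w ∈ ({e₁, e₂, e₃} : Set (Sym2 V)) := htrip ▸ (⟨hw, hvw⟩ :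
        w ∈ {e | e ∈ G.edgeSet \ E0 ∧ v ∈ e})
      rcases this with rfl | rfl | rfl
      · exact Finset.mem_union_left _ (Finset.mem_union_left _ hjw)
      · exact Finset.mem_union_left _ (Finset.mem_union_right _ hjw)
      · exact Finset.mem_union_right _ hjw
    have hcards : (c e₁).card + (c e₂).card + (c e₃).card = 3 := by
      have h1 : (c e₁ ∪ c e₂ ∪ c e₃).card = (c e₁).card + (c e₂).card + (c e₃).card := by
        rw [Finset.card_union_of_disjoint, Finset.card_union_of_disjoint hd12]
        rw [Finset.disjoint_union_left]
        exact ⟨hd13, hd23⟩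
      have h2 : c e₁ ∪ c e₂ ∪ c e₃ = univ :=
        Finset.eq_univ_of_forall (fun j => hcover (Finset.mem_univ j))
      rw [h2] at h1
      simp at h1
      omega
    have hp1 : 0 < (c e₁).card := Finset.card_pos.mpr (cne e₁ he₁)
    have hp2 : 0 < (c e₂).card := Finset.card_pos.mpr (cne e₂ he₂)
    have hp3 : 0 < (c e₃).card := Finset.card_pos.mpr (cne e₃ he₃.1)
    have hc1 : (c e₁).card = 1 := by omega
    have hc2 : (c e₂).card = 1 := by omega
    obtain ⟨a, ha⟩ := Finset.card_eq_one.mp hc1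
    obtain ⟨b, hb⟩ := Finset.card_eq_one.mp hc2
    have hab : a ≠ b := by
      intro h
      subst h
      have := Finset.disjoint_left.mp hd12 (ha ▸ Finset.mem_singleton_self a)
      exact this (hb ▸ Finset.mem_singleton_self a)
    rw [fsing ha, fsing hb]
    exact hab
  · -- degree-2 case
    intro h2 e₁ he₁ e₂ he₂ hv₁ hv₂
    obtain ⟨x, y, hxy, hset⟩ := Set.ncard_eq_two.mp h2
    have hvx : v ∈ x := by
      have : x ∈ {e | e ∈ G.edgeSet \ E0 ∧ v ∈ e} := hset ▸ (by simp : x ∈ ({x, y} : Set (Sym2 V)))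
      exact this.2
    have hvy : v ∈ y := by
      have : y ∈ {e | e ∈ G.edgeSet \ E0 ∧ v ∈ e} := hset ▸ (by simp : y ∈ ({x, y} : Set (Sym2 V)))
      exact this.2
    have hxE : x ∈ G.edgeSet \ E0 := by
      have : x ∈ {e | e ∈ G.edgeSet \ E0 ∧ v ∈ e} := hset ▸ (by simp : x ∈ ({x, y} : Set (Sym2 V)))
      exact this.1
    have hyE : y ∈ G.edgeSet \ E0 := by
      have : y ∈ {e | e ∈ G.edgeSet \ E0 ∧ v ∈ e} := hset ▸ (by simp : y ∈ ({x, y} : Set (Sym2 V)))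
      exact this.1
    have hdxy := cdisj hvx hvy hxy
    have hcover : (univ : Finset (Fin 3)) ⊆ c x ∪ c y := by
      intro j _
      obtain ⟨w, hw, hvw, hjw⟩ := lowslot v j
      have : w ∈ ({x, y} : Set (Sym2 V)) := hset ▸ (⟨hw, hvw⟩ :
        w ∈ {e | e ∈ G.edgeSet \ E0 ∧ v ∈ e})
      rcases this with rfl | rfl
      · exact Finset.mem_union_left _ hjw
      · exact Finset.mem_union_right _ hjw
    have hcards : (c x).card + (c y).card = 3 := by
      have h1 : (c x ∪ c y).card = (c x).card + (c y).card :=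
        Finset.card_union_of_disjoint hdxy
      have hu : c x ∪ c y = univ := Finset.eq_univ_of_forall (fun j => hcover (Finset.mem_univ j))
      rw [hu] at h1
      simp at h1
      omega
    have hkey : f x = f y := by
      have hle1 : (c x).card ≤ 3 := Finset.card_le_card (Finset.subset_univ _) |>.trans (by simp)
      have hp1 : 0 < (c x).card := Finset.card_pos.mpr (cne x hxE)
      have hp2 : 0 < (c y).card := Finset.card_pos.mpr (cne y hyE)
      rcases (by omega : (c x).card = 1 ∧ (c y).card = 2 ∨ (c x).card = 2 ∧ (c y).card = 1) with
        ⟨hcx, hcy⟩ | ⟨hcx, hcy⟩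
      · obtain ⟨a, ha⟩ := Finset.card_eq_one.mp hcx
        obtain ⟨b, d, hbd, hbdset⟩ := Finset.card_eq_two.mp hcy
        have hab : a ≠ b := by
          intro h
          subst h
          exact Finset.disjoint_left.mp hdxy (ha ▸ Finset.mem_singleton_self a)
            (hbdset ▸ by simp)
        have had : a ≠ d := by
          intro h
          subst h
          exact Finset.disjoint_left.mp hdxy (ha ▸ Finset.mem_singleton_self a)
            (hbdset ▸ by simp)
        rw [fsing ha, fpair hbd hbdset]
        exact (arith a b d hab had hbd).symm
      · obtain ⟨a, ha⟩ := Finset.card_eq_one.mp hcy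
        obtain ⟨b, d, hbd, hbdset⟩ := Finset.card_eq_two.mp hcx
        have hab : a ≠ b := by
          intro h
          subst h
          exact Finset.disjoint_left.mp hdxy (hbdset ▸ by simp) (ha ▸ Finset.mem_singleton_self a)
        have had : a ≠ d := by
          intro h
          subst h
          exact Finset.disjoint_left.mp hdxy (hbdset ▸ by simp) (ha ▸ Finset.mem_singleton_self a)
        rw [fsing ha, fpair hbd hbdset]
        exact arith a b d hab had hbd
    have hm1 : e₁ ∈ ({x, y} : Set (Sym2 V)) := hset ▸ (⟨he₁, hv₁⟩ :
      e₁ ∈ {e | e ∈ G.edgeSet \ E0 ∧ v ∈ e})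
    have hm2 : e₂ ∈ ({x, y} : Set (Sym2 V)) := hset ▸ (⟨he₂, hv₂⟩ :
      e₂ ∈ {e | e ∈ G.edgeSet \ E0 ∧ v ∈ e})
    rcases hm1 with rfl | rfl <;> rcases hm2 with rfl | rfl
    · rfl
    · exact hkey
    · exact hkey.symm
    · rfl
private lemma backward (hcubic : ∀ v : V, (G.neighborSet v).ncard = 3)
    {M : Fin 6 → Set (Sym2 V)} (hPM : ∀ i, IsPerfectMatchingSet G (M i))
    (hct : ∀ e ∈ G.edgeSet, (univ.filter (fun i : Fin 6 => e ∈ M i)).card = 2) :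
    ∃ E0 E2 : Set (Sym2 V), IsMatchingSet G E0 ∧ IsMatchingSet G E2 ∧
      Disjoint E0 E2 ∧ (∀ v : V, Even {e ∈ E0 ∪ E2 | v ∈ e}.ncard) ∧
      SuppressionColorable G E0 ∧ SuppressionColorable G E2 := by
  set ρ : Fin 6 → Fin 6 := fun i => ⟨(i.val + 3) % 6, by omega⟩ with hρdef
  have hρρ : ∀ i, ρ (ρ i) = i := by decide
  have hρ1 : ∀ i : Fin 6, 3 ≤ (ρ i).val ↔ i.val < 3 := by decide
  have hρ2 : ∀ i : Fin 6, (ρ i).val < 3 ↔ 3 ≤ i.val := by decide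
  have hPM' : ∀ i, IsPerfectMatchingSet G ((M ∘ ρ) i) := fun i => hPM (ρ i)
  have hct' : ∀ e ∈ G.edgeSet, (univ.filter (fun i : Fin 6 => e ∈ (M ∘ ρ) i)).card = 2 := by
    intro e he
    rw [← hct e he]
    apply Finset.card_bij (fun i _ => ρ i)
    · intro i hi
      rw [Finset.mem_filter] at hi ⊢
      exact ⟨Finset.mem_univ _, hi.2⟩
    · intro i hi j hj h
      have := congrArg ρ h
      rwa [hρρ, hρρ] at this
    · intro i hi
      rw [Finset.mem_filter] at hi
      refine ⟨ρ i, Finset.mem_filter.mpr ⟨Finset.mem_univ _, ?_⟩, hρρ i⟩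
      show e ∈ M (ρ (ρ i))
      rw [hρρ]
      exact hi.2
  refine ⟨{e | e ∈ G.edgeSet ∧ ∀ i : Fin 6, e ∈ M i → 3 ≤ i.val},
    {e | e ∈ G.edgeSet ∧ ∀ i : Fin 6, e ∈ (M ∘ ρ) i → 3 ≤ i.val},
    hi_matching hcubic hPM hct, hi_matching hcubic hPM' hct', ?_, ?_,
    hi_colorable hcubic hPM hct, hi_colorable hcubic hPM' hct'⟩
  case _ =>
    -- disjointness
    rw [Set.disjoint_left]
    rintro e ⟨heE, h0⟩ ⟨_, h2⟩
    have hne : (univ.filter (fun i : Fin 6 => e ∈ M i)).Nonempty := by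
      rw [← Finset.card_pos, hct e heE]
      norm_num
    obtain ⟨i, hi⟩ := hne
    rw [Finset.mem_filter] at hi
    have ha := h0 i hi.2
    have hb := h2 (ρ i) (by show e ∈ M (ρ (ρ i)); rw [hρρ]; exact hi.2)
    rw [hρ1] at hb
    omega
  case _ =>
    -- evenness
    intro v
    set E0 : Set (Sym2 V) := {e | e ∈ G.edgeSet ∧ ∀ i : Fin 6, e ∈ M i → 3 ≤ i.val} with hE0
    set E2 : Set (Sym2 V) :=
      {e | e ∈ G.edgeSet ∧ ∀ i : Fin 6, e ∈ (M ∘ ρ) i → 3 ≤ i.val} with hE2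
    by_cases hcv : ∃ e ∈ E0, v ∈ e
    · obtain ⟨e0, he0, hv0⟩ := hcv
      obtain ⟨e', he', hv'⟩ := hi_cov_lo hcubic hPM hct he0 hv0
      have he'2 : e' ∈ E2 := by
        refine ⟨he'.1, fun i hi => ?_⟩
        have : e' ∈ M (ρ i) := hi
        have := he'.2 (ρ i) this
        rw [hρ2] at this
        exact this
      have hne : e0 ≠ e' := by
        intro h
        subst h
        have hne0 : (univ.filter (fun i : Fin 6 => e0 ∈ M i)).Nonempty := by
          rw [← Finset.card_pos, hct e0 he0.1]
          norm_num
        obtain ⟨i, hi⟩ := hne0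
        rw [Finset.mem_filter] at hi
        have h1 := he0.2 i hi.2
        have h2 := he'.2 i hi.2
        omega
      have hset : {e ∈ E0 ∪ E2 | v ∈ e} = {e0, e'} := by
        ext e
        constructor
        · rintro ⟨h | h, hv⟩
          · exact Or.inl (matching_unique (hi_matching hcubic hPM hct) h he0 hv hv0)
          · exact Or.inr (matching_unique (hi_matching hcubic hPM' hct') h he'2 hv hv')
        · rintro (rfl | rfl)
          exacts [⟨Or.inl he0, hv0⟩, ⟨Or.inr he'2, hv'⟩]
      rw [hset, Set.ncard_pair hne]
      exact even_two
    · have hcv2 : ¬ ∃ e ∈ E2, v ∈ e := by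
        rintro ⟨e2, he2, hv2⟩
        obtain ⟨e', he', hv'⟩ := hi_cov_lo hcubic hPM' hct' he2 hv2
        apply hcv
        refine ⟨e', ⟨he'.1, fun i hi => ?_⟩, hv'⟩
        have h1 : e' ∈ (M ∘ ρ) (ρ i) := by
          show e' ∈ M (ρ (ρ i))
          rw [hρρ]
          exact hi
        have := he'.2 (ρ i) h1
        rw [hρ2] at this
        omega
      have hset : {e ∈ E0 ∪ E2 | v ∈ e} = ∅ := by
        ext e
        simp only [Set.mem_setOf_eq, Set.mem_empty_iff_false, iff_false, not_and]
        rintro (h | h) hv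
        · exact hcv ⟨e, h, hv⟩
        · exact hcv2 ⟨e, h, hv⟩
      rw [hset, Set.ncard_empty]
      exact Even.zero
end


/-- Hao–Niu–Wang–Zhang–Zhang: a bridgeless cubic graph `G` has a
Fulkerson cover iff there are two disjoint matchings `E0`, `E2` whose union
induces an even subgraph and such that `\overline{G ∖ E0}` and `\overline{G ∖ E2}`
are 3-edge-colorable. -/
theorem stmt11 {V : Type*} [Fintype V] (G : SimpleGraph V)
    (hbridgeless : ∀ e ∈ G.edgeSet, ¬ G.IsBridge e)
    (hcubic : ∀ v : V, (G.neighborSet v).ncard = 3) :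
    (∃ E0 E2 : Set (Sym2 V), IsMatchingSet G E0 ∧ IsMatchingSet G E2 ∧
        Disjoint E0 E2 ∧ (∀ v : V, Even {e ∈ E0 ∪ E2 | v ∈ e}.ncard) ∧
        SuppressionColorable G E0 ∧ SuppressionColorable G E2) ↔
      ∃ M : Fin 6 → Set (Sym2 V), (∀ i, IsPerfectMatchingSet G (M i)) ∧
        ∀ e ∈ G.edgeSet, (Finset.univ.filter (fun i : Fin 6 => e ∈ M i)).card = 2 := by
  constructor
  · rintro ⟨E0, E2, hE0, hE2, hd, heven, hS0, hS2⟩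
    exact forward hcubic hE0 hE2 hd heven hS0 hS2
  · rintro ⟨M, hPM, hct⟩
    exact backward hcubic hPM hct
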